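/- For every positive integer k, there exists a bipartite simple graph G with μ_int(G) = k. -/

import Mathlib

open SimpleGraph

/-- The set ("spectrum") of colors appearing on edges incident to vertex `v`
under the edge coloring `c`. -/
def SimpleGraph.colorSpectrum {V : Type*} (G : SimpleGraph V) (c : Sym2 V → ℕ) (v : V) :
    Set ℕ :=
  {n | ∃ w, G.Adj v w ∧ c s(v, w) = n}

/-- A set of natural numbers is an interval of consecutive integers. -/
def IsIntervalSet (S : Set ℕ) : Prop :=
  ∀ a ∈ S, ∀ b ∈ S, ∀ x, a ≤ x → x ≤ b → x ∈ S

/-- `c` is a `k`-improper interval edge coloring of `G`: at most `k` edges with a common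
endpoint share a color, and the colors at each vertex form an interval. -/
def SimpleGraph.IsImproperIntervalColoring {V : Type*} (G : SimpleGraph V)
    (c : Sym2 V → ℕ) (k : ℕ) : Prop :=
  (∀ v n, {w | G.Adj v w ∧ c s(v, w) = n}.ncard ≤ k) ∧
    ∀ v, IsIntervalSet (G.colorSpectrum c v)

/-- The interval coloring impropriety of `G`: the least `k` such that `G` has a
`k`-improper interval edge coloring. -/
noncomputable def SimpleGraph.muInt {V : Type*} (G : SimpleGraph V) : ℕ :=
  sInf {k | ∃ c : Sym2 V → ℕ, G.IsImproperIntervalColoring c k}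

namespace Impro

/-- number of middle branches -/
def rr (k : ℕ) : ℕ := 2 * k * k - 1

/-- vertex type -/
abbrev VV (k : ℕ) := (Unit ⊕ Fin (rr k)) ⊕ ((Fin (rr k) × Fin k) ⊕ Unit)

abbrev uu (k : ℕ) : VV k := Sum.inl (Sum.inl ())
abbrev ui (k : ℕ) (i : Fin (rr k)) : VV k := Sum.inl (Sum.inr i)
abbrev xx (k : ℕ) (i : Fin (rr k)) (j : Fin k) : VV k := Sum.inr (Sum.inl (i, j))
abbrev vv (k : ℕ) : VV k := Sum.inr (Sum.inr ())

def R (k : ℕ) : VV k → VV k → Prop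
  | Sum.inl (Sum.inl _), Sum.inl (Sum.inr _) => True
  | Sum.inl (Sum.inr i), Sum.inr (Sum.inl p) => p.1 = i
  | Sum.inr (Sum.inl _), Sum.inr (Sum.inr _) => True
  | _, _ => False

def GG (k : ℕ) : SimpleGraph (VV k) where
  Adj a b := R k a b ∨ R k b a
  symm := by constructor; intro a b h; exact h.symm
  loopless := by
    constructor
    intro a h
    rcases a with (⟨⟩|i)|(⟨i,j⟩|⟨⟩) <;> rcases h with h|h <;> exact h.elim

lemma adj_uu_ui (k : ℕ) (i : Fin (rr k)) : (GG k).Adj (uu k) (ui k i) := Or.inl trivial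
lemma adj_ui_xx (k : ℕ) (i : Fin (rr k)) (j : Fin k) : (GG k).Adj (ui k i) (xx k i j) :=
  Or.inl rfl
lemma adj_xx_vv (k : ℕ) (i : Fin (rr k)) (j : Fin k) : (GG k).Adj (xx k i j) (vv k) :=
  Or.inl trivial

lemma adj_uu_iff {k : ℕ} {w : VV k} : (GG k).Adj (uu k) w ↔ ∃ i, w = ui k i := by
  constructor
  · rcases w with (⟨⟩|i)|(⟨i,j⟩|⟨⟩) <;> rintro (h|h) <;>
      first | exact ⟨i, rfl⟩ | exact h.elim
  · rintro ⟨i, rfl⟩; exact Or.inl trivial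

lemma adj_ui_iff {k : ℕ} {i : Fin (rr k)} {w : VV k} :
    (GG k).Adj (ui k i) w ↔ w = uu k ∨ ∃ j, w = xx k i j := by
  constructor
  · rcases w with (⟨⟩|i')|(⟨i',j⟩|⟨⟩) <;> rintro (h|h) <;>
      first
        | exact Or.inl rfl
        | exact Or.inr ⟨j, by cases h; rfl⟩
        | exact h.elim
  · rintro (rfl | ⟨j, rfl⟩)
    · exact Or.inr trivial
    · exact Or.inl rfl

lemma adj_xx_iff {k : ℕ} {i : Fin (rr k)} {j : Fin k} {w : VV k} :
    (GG k).Adj (xx k i j) w ↔ w = ui k i ∨ w = vv k := by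
  constructor
  · rcases w with (⟨⟩|i')|(⟨i',j'⟩|⟨⟩) <;> rintro (h|h) <;>
      first
        | exact Or.inl (by cases h; rfl)
        | exact Or.inr rfl
        | exact h.elim
  · rintro (rfl | rfl)
    · exact Or.inr rfl
    · exact Or.inl trivial

lemma adj_vv_iff {k : ℕ} {w : VV k} : (GG k).Adj (vv k) w ↔ ∃ i j, w = xx k i j := by
  constructor
  · rcases w with (⟨⟩|i')|(⟨i',j'⟩|⟨⟩) <;> rintro (h|h) <;>
      first | exact ⟨i', j', rfl⟩ | exact h.elim
  · rintro ⟨i, j, rfl⟩; exact Or.inr trivial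

def FF (k : ℕ) : VV k → VV k → ℕ
  | Sum.inl (Sum.inl _), Sum.inl (Sum.inr i) => (i : ℕ)
  | Sum.inl (Sum.inr _), Sum.inr (Sum.inl p) => (p.1 : ℕ) + 1
  | Sum.inr (Sum.inl p), Sum.inr (Sum.inr _) => (p.1 : ℕ) + 2
  | _, _ => 0

def cUp (k : ℕ) : Sym2 (VV k) → ℕ :=
  Sym2.lift ⟨fun a b => max (FF k a b) (FF k b a), fun a b => max_comm _ _⟩

lemma cUp_uu_ui (k : ℕ) (i : Fin (rr k)) : cUp k s(uu k, ui k i) = (i : ℕ) := by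
  show max (FF k (uu k) (ui k i)) (FF k (ui k i) (uu k)) = (i : ℕ)
  show max (i : ℕ) 0 = (i : ℕ)
  simp

lemma cUp_ui_xx (k : ℕ) (i i' : Fin (rr k)) (j : Fin k) :
    cUp k s(ui k i, xx k i' j) = (i' : ℕ) + 1 := by
  show max (FF k (ui k i) (xx k i' j)) (FF k (xx k i' j) (ui k i)) = (i' : ℕ) + 1
  show max ((i' : ℕ) + 1) 0 = (i' : ℕ) + 1
  simp

lemma cUp_xx_vv (k : ℕ) (i : Fin (rr k)) (j : Fin k) :
    cUp k s(xx k i j, vv k) = (i : ℕ) + 2 := by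
  show max (FF k (xx k i j) (vv k)) (FF k (vv k) (xx k i j)) = (i : ℕ) + 2
  show max ((i : ℕ) + 2) 0 = (i : ℕ) + 2
  simp

/-- key interval-size bound -/
lemma key {S : Set ℕ} (hS : IsIntervalSet S) (hfin : S.Finite) {a b : ℕ}
    (ha : a ∈ S) (hb : b ∈ S) : b < a + S.ncard := by
  rcases le_or_gt b a with hba | hab
  · have : 0 < S.ncard := (Set.ncard_pos hfin).2 ⟨a, ha⟩
    omega
  · have hsub : Set.Icc a b ⊆ S := fun x hx => hS a ha b hb x hx.1 hx.2
    have h1 : (Set.Icc a b).ncard ≤ S.ncard := Set.ncard_le_ncard hsub hfin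
    rw [← Finset.coe_Icc, Set.ncard_coe_finset, Nat.card_Icc] at h1
    omega

lemma range_ncard_le {α : Type*} {m : ℕ} (g : Fin m → α) : (Set.range g).ncard ≤ m := by
  rw [← Set.image_univ]
  refine le_trans (Set.ncard_image_le Set.finite_univ) ?_
  simp [Set.ncard_univ]

lemma ncard_le_one_of_subsingleton {α : Type*} {S : Set α} (h : S.Subsingleton) :
    S.ncard ≤ 1 := by
  rcases h.eq_empty_or_singleton with rfl | ⟨a, rfl⟩ <;> simp

lemma pair_interval {S : Set ℕ} {t : ℕ} (h : S ⊆ {t, t + 1}) : IsIntervalSet S := by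
  intro a ha b hb x h1 h2
  have ha' := h ha
  have hb' := h hb
  simp only [Set.mem_insert_iff, Set.mem_singleton_iff] at ha' hb'
  have hx : x = a ∨ x = b := by omega
  rcases hx with rfl | rfl <;> assumption



lemma upper (k : ℕ) (hk : 0 < k) :
    (GG k).IsImproperIntervalColoring (cUp k) k := by
  constructor
  · intro a n
    rcases a with (⟨⟩|i)|(⟨i,j⟩|⟨⟩)
    · -- a = uu
      refine le_trans (ncard_le_one_of_subsingleton ?_) hk
      intro w1 hw1 w2 hw2
      obtain ⟨i1, rfl⟩ := adj_uu_iff.1 hw1.1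
      obtain ⟨i2, rfl⟩ := adj_uu_iff.1 hw2.1
      have h1 := hw1.2; have h2 := hw2.2
      rw [cUp_uu_ui] at h1 h2
      have : i1 = i2 := Fin.ext (by omega)
      rw [this]
    · -- a = ui i
      by_cases hn : n = (i : ℕ) + 1
      · have hsub : {w | (GG k).Adj (ui k i) w ∧ cUp k s(ui k i, w) = n} ⊆
            Set.range (fun j => xx k i j) := by
          rintro w ⟨hadj, hc⟩
          rcases adj_ui_iff.1 hadj with rfl | ⟨j', rfl⟩
          · exfalso
            rw [Sym2.eq_swap, cUp_uu_ui] at hc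
            omega
          · exact ⟨j', rfl⟩
        exact le_trans (Set.ncard_le_ncard hsub (Set.finite_range _)) (range_ncard_le _)
      · refine le_trans (ncard_le_one_of_subsingleton ?_) hk
        intro w1 hw1 w2 hw2
        rcases adj_ui_iff.1 hw1.1 with rfl | ⟨j1, rfl⟩
        · rcases adj_ui_iff.1 hw2.1 with rfl | ⟨j2, rfl⟩
          · rfl
          · exfalso; have := hw2.2; rw [cUp_ui_xx] at this; exact hn this.symm
        · exfalso; have := hw1.2; rw [cUp_ui_xx] at this; exact hn this.symm
    · -- a = xx i j
      refine le_trans (ncard_le_one_of_subsingleton ?_) hk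
      intro w1 hw1 w2 hw2
      rcases adj_xx_iff.1 hw1.1 with rfl | rfl <;> rcases adj_xx_iff.1 hw2.1 with rfl | rfl
      · rfl
      · exfalso
        have h1 := hw1.2; have h2 := hw2.2
        rw [Sym2.eq_swap, cUp_ui_xx] at h1
        rw [cUp_xx_vv] at h2
        omega
      · exfalso
        have h1 := hw1.2; have h2 := hw2.2
        rw [cUp_xx_vv] at h1
        rw [Sym2.eq_swap, cUp_ui_xx] at h2
        omega
      · rfl
    · -- a = vv
      by_cases hn : ∃ i0 : Fin (rr k), (i0 : ℕ) + 2 = n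
      · obtain ⟨i0, hi0⟩ := hn
        have hsub : {w | (GG k).Adj (vv k) w ∧ cUp k s(vv k, w) = n} ⊆
            Set.range (fun j => xx k i0 j) := by
          rintro w ⟨hadj, hc⟩
          obtain ⟨i', j', rfl⟩ := adj_vv_iff.1 hadj
          rw [Sym2.eq_swap, cUp_xx_vv] at hc
          have : i' = i0 := Fin.ext (by omega)
          exact ⟨j', by rw [this]⟩
        exact le_trans (Set.ncard_le_ncard hsub (Set.finite_range _)) (range_ncard_le _)
      · have hemp : {w | (GG k).Adj (vv k) w ∧ cUp k s(vv k, w) = n} = ∅ := by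
          refine Set.eq_empty_iff_forall_notMem.2 ?_
          rintro w ⟨hadj, hc⟩
          obtain ⟨i', j', rfl⟩ := adj_vv_iff.1 hadj
          rw [Sym2.eq_swap, cUp_xx_vv] at hc
          exact hn ⟨i', hc⟩
        rw [hemp]; simp
  · intro a
    rcases a with (⟨⟩|i)|(⟨i,j⟩|⟨⟩)
    · -- uu : spectrum = {n | n < rr k}
      intro x hx y hy z h1 h2
      obtain ⟨w, hadj, hc⟩ := hy
      obtain ⟨i2, rfl⟩ := adj_uu_iff.1 hadj
      rw [cUp_uu_ui] at hc
      have hz : z < rr k := by have := i2.isLt; omega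
      exact ⟨ui k ⟨z, hz⟩, adj_uu_ui k _, cUp_uu_ui k _⟩
    · -- ui i : spectrum ⊆ {i, i+1}
      refine pair_interval (t := (i : ℕ)) ?_
      rintro n ⟨w, hadj, hc⟩
      rcases adj_ui_iff.1 hadj with rfl | ⟨j', rfl⟩
      · rw [Sym2.eq_swap, cUp_uu_ui] at hc
        exact Or.inl hc.symm
      · rw [cUp_ui_xx] at hc
        exact Or.inr (by simp [← hc])
    · -- xx i j : spectrum ⊆ {i+1, i+2}
      refine pair_interval (t := (i : ℕ) + 1) ?_
      rintro n ⟨w, hadj, hc⟩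
      rcases adj_xx_iff.1 hadj with rfl | rfl
      · rw [Sym2.eq_swap, cUp_ui_xx] at hc
        exact Or.inl hc.symm
      · rw [cUp_xx_vv] at hc
        exact Or.inr (by simp [← hc])
    · -- vv : spectrum = {n | 2 ≤ n < rr k + 2}
      intro x hx y hy z h1 h2
      obtain ⟨w1, hadj1, hc1⟩ := hx
      obtain ⟨i1, j1, rfl⟩ := adj_vv_iff.1 hadj1
      rw [Sym2.eq_swap, cUp_xx_vv] at hc1
      obtain ⟨w2, hadj2, hc2⟩ := hy
      obtain ⟨i2, j2, rfl⟩ := adj_vv_iff.1 hadj2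
      rw [Sym2.eq_swap, cUp_xx_vv] at hc2
      have hz1 : 2 ≤ z := by omega
      have hz2 : z - 2 < rr k := by have := i2.isLt; omega
      refine ⟨xx k ⟨z - 2, hz2⟩ ⟨0, hk⟩, Or.inr trivial, ?_⟩
      rw [Sym2.eq_swap, cUp_xx_vv]
      simp
      omega



lemma lower (k : ℕ) (hk : 0 < k) {j : ℕ} (hj : j < k) {c : Sym2 (VV k) → ℕ}
    (h : (GG k).IsImproperIntervalColoring c j) : False := by
  classical
  obtain ⟨himp, hint⟩ := h
  have hkk : 2 ≤ 2 * k * k := by nlinarith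
  have hrr : rr k + 1 = 2 * k * k := by
    have : 1 ≤ 2 * k * k := by omega
    exact Nat.sub_add_cancel this
  have hr0 : 0 < rr k := by omega
  set r := rr k with hr
  -- edge colors
  set p : Fin r → ℕ := fun i => c s(uu k, ui k i) with hp
  set q : Fin r → Fin k → ℕ := fun i j' => c s(ui k i, xx k i j') with hq
  set g : Fin r → Fin k → ℕ := fun i j' => c s(xx k i j', vv k) with hg
  -- spectrum at uu
  set Su := (GG k).colorSpectrum c (uu k) with hSu
  have hSu_sub : Su ⊆ Set.range p := by
    rintro n ⟨w, hadj, rfl⟩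
    obtain ⟨i, rfl⟩ := adj_uu_iff.1 hadj
    exact ⟨i, rfl⟩
  have hSu_fin : Su.Finite := (Set.finite_range p).subset hSu_sub
  have hSu_card : Su.ncard ≤ r :=
    le_trans (Set.ncard_le_ncard hSu_sub (Set.finite_range p)) (range_ncard_le _)
  have hpmem : ∀ i, p i ∈ Su := fun i => ⟨ui k i, adj_uu_ui k i, rfl⟩
  have hSu_ne : Su.Nonempty := ⟨p ⟨0, hr0⟩, hpmem _⟩
  set A := sInf Su with hA
  have hAmem : A ∈ Su := Nat.sInf_mem hSu_ne
  have hAle : ∀ i, A ≤ p i := fun i => Nat.sInf_le (hpmem i)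
  have hSuint : IsIntervalSet Su := hint (uu k)
  have hup : ∀ i, p i < A + r := fun i =>
    lt_of_lt_of_le (key hSuint hSu_fin hAmem (hpmem i)) (by omega)
  -- spectra at ui i
  have hQ : ∀ i j', q i j' < p i + (k + 1) ∧ p i < q i j' + (k + 1) := by
    intro i j'
    set Si := (GG k).colorSpectrum c (ui k i) with hSi
    have hsub : Si ⊆ insert (p i) (Set.range (q i)) := by
      rintro n ⟨w, hadj, rfl⟩
      rcases adj_ui_iff.1 hadj with rfl | ⟨j2, rfl⟩
      · exact Or.inl (by rw [Sym2.eq_swap])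
      · exact Or.inr ⟨j2, rfl⟩
    have hfin : Si.Finite := (((Set.finite_range (q i)).insert _)).subset hsub
    have hcard : Si.ncard ≤ k + 1 := by
      refine le_trans (Set.ncard_le_ncard hsub ((Set.finite_range (q i)).insert _)) ?_
      refine le_trans (Set.ncard_insert_le _ _) ?_
      have := range_ncard_le (q i)
      omega
    have hqmem : q i j' ∈ Si := ⟨xx k i j', adj_ui_xx k i j', rfl⟩
    have hpmem' : p i ∈ Si := ⟨uu k, Or.inr trivial, by rw [Sym2.eq_swap]⟩
    have hSiint : IsIntervalSet Si := hint (ui k i)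
    constructor
    · exact lt_of_lt_of_le (key hSiint hfin hpmem' hqmem) (by omega)
    · exact lt_of_lt_of_le (key hSiint hfin hqmem hpmem') (by omega)
  -- spectra at xx i j'
  have hX : ∀ i j', g i j' < q i j' + 2 ∧ q i j' < g i j' + 2 := by
    intro i j'
    set Sx := (GG k).colorSpectrum c (xx k i j') with hSx
    have hsub : Sx ⊆ insert (q i j') {g i j'} := by
      rintro n ⟨w, hadj, rfl⟩
      rcases adj_xx_iff.1 hadj with rfl | rfl
      · exact Or.inl (by rw [Sym2.eq_swap])
      · exact Or.inr rfl
    have hfin : Sx.Finite := ((Set.finite_singleton _).insert _).subset hsub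
    have hcard : Sx.ncard ≤ 2 := by
      refine le_trans (Set.ncard_le_ncard hsub ((Set.finite_singleton _).insert _)) ?_
      refine le_trans (Set.ncard_insert_le _ _) ?_
      simp
    have hqmem : q i j' ∈ Sx := ⟨ui k i, Or.inr rfl, by rw [Sym2.eq_swap]⟩
    have hgmem : g i j' ∈ Sx := ⟨vv k, adj_xx_vv k i j', rfl⟩
    have hSxint : IsIntervalSet Sx := hint (xx k i j')
    constructor
    · exact lt_of_lt_of_le (key hSxint hfin hqmem hgmem) (by omega)
    · exact lt_of_lt_of_le (key hSxint hfin hgmem hqmem) (by omega)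
  -- window bound
  have hwin : ∀ i j', A ≤ g i j' + (k + 1) ∧ g i j' ≤ A + r + k := by
    intro i j'
    have h1 := hQ i j'
    have h2 := hX i j'
    have h3 := hAle i
    have h4 := hup i
    omega
  -- pigeonhole at vv
  set s : Finset (VV k) := Finset.univ.filter (fun w => (GG k).Adj (vv k) w) with hs
  have hsmem : ∀ i j', xx k i j' ∈ s := fun i j' =>
    Finset.mem_filter.2 ⟨Finset.mem_univ _, Or.inr trivial⟩
  have hcard1 : r * k ≤ s.card := by
    have hinj : Set.InjOn (fun ij : Fin r × Fin k => xx k ij.1 ij.2) ↑(Finset.univ : Finset (Fin r × Fin k)) := by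
      intro a _ b _ hab
      simp only [Sum.inr.injEq, Sum.inl.injEq, Prod.mk.injEq] at hab
      exact Prod.ext hab.1 hab.2
    have := Finset.card_le_card_of_injOn (fun ij : Fin r × Fin k => xx k ij.1 ij.2)
      (fun ij _ => hsmem ij.1 ij.2) hinj
    simpa using this
  set t : Finset ℕ := Finset.Icc (A - (k + 1)) (A + r + k) with ht
  have hmaps : ∀ w ∈ s, c s(vv k, w) ∈ t := by
    intro w hw
    obtain ⟨i, j', rfl⟩ := adj_vv_iff.1 (Finset.mem_filter.1 hw).2
    have hw' := hwin i j'
    have hcc : c s(vv k, xx k i j') = g i j' := by rw [Sym2.eq_swap]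
    rw [hcc, Finset.mem_Icc]
    omega
  have hfib : ∀ b ∈ t, (s.filter (fun w => c s(vv k, w) = b)).card ≤ j := by
    intro b _
    have hset : ((s.filter (fun w => c s(vv k, w) = b)) : Set (VV k)) =
        {w | (GG k).Adj (vv k) w ∧ c s(vv k, w) = b} := by
      ext w
      simp [hs, Finset.mem_filter]
    rw [← Set.ncard_coe_finset, hset]
    exact himp (vv k) b
  have hsum := Finset.card_eq_sum_card_fiberwise hmaps
  have hcard2 : s.card ≤ t.card * j := by
    rw [hsum]
    calc ∑ b ∈ t, (s.filter (fun w => c s(vv k, w) = b)).card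
        ≤ ∑ _b ∈ t, j := Finset.sum_le_sum hfib
      _ = t.card * j := by rw [Finset.sum_const, smul_eq_mul]
  have htcard : t.card ≤ r + 2 * k + 2 := by
    rw [Nat.card_Icc]
    omega
  have h1 : r * k ≤ (r + 2 * k + 2) * j :=
    le_trans hcard1 (le_trans hcard2 (Nat.mul_le_mul_right j htcard))
  have h2 : (r + 2 * k + 2) * j + (r + 2 * k + 2) ≤ (r + 2 * k + 2) * k := by
    have hj1 : j + 1 ≤ k := hj
    calc (r + 2 * k + 2) * j + (r + 2 * k + 2) = (r + 2 * k + 2) * (j + 1) := by ring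
      _ ≤ (r + 2 * k + 2) * k := Nat.mul_le_mul_left _ hj1
  have h3 : (r + 2 * k + 2) * k = r * k + 2 * k * k + 2 * k := by ring
  rw [show 2 * k * k = r + 1 from hrr.symm] at h3
  linarith [h1, h2, h3]



lemma transfer {V' W' : Type*} (G : SimpleGraph V') (e : W' ≃ V') (c : Sym2 V' → ℕ) (j : ℕ)
    (h : G.IsImproperIntervalColoring c j) :
    (SimpleGraph.comap (⇑e) G).IsImproperIntervalColoring (fun s => c (Sym2.map (⇑e) s)) j := by
  obtain ⟨h1, h2⟩ := h
  constructor
  · intro w n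
    have hset : {w' | (G.comap ⇑e).Adj w w' ∧ (fun s => c (Sym2.map (⇑e) s)) s(w, w') = n} =
        ⇑e ⁻¹' {v' | G.Adj (e w) v' ∧ c s(e w, v') = n} := by
      ext w'
      simp [Sym2.map_pair_eq]
    have himg : ⇑e ⁻¹' {v' | G.Adj (e w) v' ∧ c s(e w, v') = n} =
        ⇑e.symm '' {v' | G.Adj (e w) v' ∧ c s(e w, v') = n} := by
      rw [Equiv.image_eq_preimage_symm]
      simp
    rw [hset, himg, Set.ncard_image_of_injective _ e.symm.injective]
    exact h1 (e w) n
  · intro w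
    have hspec : (G.comap ⇑e).colorSpectrum (fun s => c (Sym2.map (⇑e) s)) w =
        G.colorSpectrum c (e w) := by
      ext n
      constructor
      · rintro ⟨w', hadj, hc⟩
        simp only [Sym2.map_pair_eq] at hc
        exact ⟨e w', hadj, hc⟩
      · rintro ⟨v', hadj, hc⟩
        refine ⟨e.symm v', ?_, ?_⟩
        · show G.Adj (e w) (e (e.symm v'))
          simpa using hadj
        · show c (Sym2.map (⇑e) s(w, e.symm v')) = n
          rw [Sym2.map_pair_eq, Equiv.apply_symm_apply]
          exact hc
    rw [hspec]
    exact h2 (e w)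

def part (k : ℕ) : VV k → Fin 2
  | Sum.inl (Sum.inl _) => 0
  | Sum.inl (Sum.inr _) => 1
  | Sum.inr (Sum.inl _) => 0
  | Sum.inr (Sum.inr _) => 1

lemma part_valid {k : ℕ} {a b : VV k} (h : (GG k).Adj a b) : part k a ≠ part k b := by
  rcases a with (⟨⟩|i)|(⟨i,j⟩|⟨⟩) <;> rcases b with (⟨⟩|i')|(⟨i',j'⟩|⟨⟩) <;>
    rcases h with h|h <;> first | exact h.elim | simp [part]

end Impro

/-- For every positive integer `k` there is a (finite) bipartite simple graph whose
interval coloring impropriety is exactly `k`. -/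
theorem statement7 (k : ℕ) (hk : 0 < k) :
    ∃ (n : ℕ) (G : SimpleGraph (Fin n)), G.Colorable 2 ∧ G.muInt = k := by
  classical
  set e := (Fintype.equivFin (Impro.VV k)).symm with he
  refine ⟨Fintype.card (Impro.VV k), SimpleGraph.comap (⇑e) (Impro.GG k), ?_, ?_⟩
  · refine ⟨SimpleGraph.Coloring.mk (fun a => Impro.part k (e a)) ?_⟩
    intro a b hab
    exact Impro.part_valid hab
  · have hkmem : k ∈ {j | ∃ c,
        (SimpleGraph.comap (⇑e) (Impro.GG k)).IsImproperIntervalColoring c j} :=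
      ⟨_, Impro.transfer (Impro.GG k) e (Impro.cUp k) k (Impro.upper k hk)⟩
    apply le_antisymm
    · exact Nat.sInf_le hkmem
    · apply le_csInf ⟨k, hkmem⟩
      rintro j ⟨c', hc'⟩
      by_contra hlt
      push_neg at hlt
      have hGG : SimpleGraph.comap (⇑e.symm) (SimpleGraph.comap (⇑e) (Impro.GG k)) =
          Impro.GG k := by
        ext a b
        simp
      have htr := Impro.transfer _ e.symm c' j hc'
      rw [hGG] at htr
      exact Impro.lower k hk hlt htr
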